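/- Let F = diag(f₁,f₂,f₃) with f₁,f₂,f₃ ≥ 0, P = exp(hat(y)) ∈ SO(3) with y ∈ R^3, and let 𝔠 be the cyclic permutations of (1,2,3). Then Φ = (1/2)·tr(F(I − P)) satisfies Φ = ((1−cos‖y‖)/(2‖y‖²))·Σ_{(i,j,k)∈𝔠}(f_i+f_j)·y_k². -/

import Mathlib

open Matrix

noncomputable def hat (x : Fin 3 → ℝ) : Matrix (Fin 3) (Fin 3) ℝ :=
  !![0, -x 2, x 1; x 2, 0, -x 0; -x 1, x 0, 0]

noncomputable def vee (A : Matrix (Fin 3) (Fin 3) ℝ) : Fin 3 → ℝ := ![A 2 1, A 0 2, A 1 0]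

def IsSO3 (R : Matrix (Fin 3) (Fin 3) ℝ) : Prop := Rᵀ * R = 1 ∧ R.det = 1

noncomputable def enorm3 (x : Fin 3 → ℝ) : ℝ := Real.sqrt (∑ i, x i ^ 2)

lemma hat_cube (y : Fin 3 → ℝ) :
    hat y * hat y * hat y = (-(y 0 ^ 2 + y 1 ^ 2 + y 2 ^ 2)) • hat y := by
  ext i j
  fin_cases i <;> fin_cases j <;>
    simp [hat, Matrix.mul_apply, Fin.sum_univ_three] <;> ring

lemma hat_pow_odd (y : Fin 3 → ℝ) (k : ℕ) :
    hat y ^ (2 * k + 1) = ((-(y 0 ^ 2 + y 1 ^ 2 + y 2 ^ 2)) ^ k) • hat y := by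
  induction k with
  | zero => simp
  | succ k ih =>
    rw [show 2 * (k + 1) + 1 = (2 * k + 1) + 2 by ring, pow_add, ih, smul_mul_assoc,
      pow_two (hat y), ← mul_assoc, hat_cube, smul_smul, ← pow_succ]

lemma hat_pow_even (y : Fin 3 → ℝ) (k : ℕ) :
    hat y ^ (2 * k + 2) = ((-(y 0 ^ 2 + y 1 ^ 2 + y 2 ^ 2)) ^ k) • (hat y * hat y) := by
  rw [show 2 * k + 2 = (2 * k + 1) + 1 by ring, pow_succ, hat_pow_odd, smul_mul_assoc]

lemma trace_FA (f₁ f₂ f₃ : ℝ) (y : Fin 3 → ℝ) :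
    Matrix.trace (Matrix.diagonal ![f₁, f₂, f₃] * hat y) = 0 := by
  simp [Matrix.trace, Fin.sum_univ_three, Matrix.mul_apply, hat]

lemma trace_FA2 (f₁ f₂ f₃ : ℝ) (y : Fin 3 → ℝ) :
    Matrix.trace (Matrix.diagonal ![f₁, f₂, f₃] * (hat y * hat y)) =
      -((f₁ + f₂) * y 2 ^ 2 + (f₂ + f₃) * y 0 ^ 2 + (f₃ + f₁) * y 1 ^ 2) := by
  simp [Matrix.trace, Fin.sum_univ_three, Matrix.mul_apply, hat, Matrix.diag]
  ring

theorem Phi_formula (f₁ f₂ f₃ : ℝ) (hf₁ : 0 ≤ f₁) (hf₂ : 0 ≤ f₂) (hf₃ : 0 ≤ f₃)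
    (y : Fin 3 → ℝ) :
    let F : Matrix (Fin 3) (Fin 3) ℝ := Matrix.diagonal ![f₁, f₂, f₃]
    let P := NormedSpace.exp (hat y)
    (1 / 2 : ℝ) * Matrix.trace (F * (1 - P)) =
      ((1 - Real.cos (enorm3 y)) / (2 * enorm3 y ^ 2)) *
        ((f₁ + f₂) * y 2 ^ 2 + (f₂ + f₃) * y 0 ^ 2 + (f₃ + f₁) * y 1 ^ 2) := by
  intro F P
  set q : ℝ := y 0 ^ 2 + y 1 ^ 2 + y 2 ^ 2 with hq
  have hq0 : 0 ≤ q := by positivity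
  set S : ℝ := (f₁ + f₂) * y 2 ^ 2 + (f₂ + f₃) * y 0 ^ 2 + (f₃ + f₁) * y 1 ^ 2 with hS
  set A := hat y with hA
  let L : Matrix (Fin 3) (Fin 3) ℝ →L[ℝ] ℝ :=
    LinearMap.toContinuousLinearMap
      ((Matrix.traceLinearMap (Fin 3) ℝ ℝ).comp (LinearMap.mulLeft ℝ F))
  have hLapp : ∀ M, L M = Matrix.trace (F * M) := fun M => rfl
  have hexp : HasSum (fun n : ℕ => ((n.factorial : ℝ)⁻¹) • A ^ n) (NormedSpace.exp A) := by
    letI : SeminormedRing (Matrix (Fin 3) (Fin 3) ℝ) := Matrix.linftyOpSemiNormedRing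
    letI : NormedRing (Matrix (Fin 3) (Fin 3) ℝ) := Matrix.linftyOpNormedRing
    letI : NormedAlgebra ℝ (Matrix (Fin 3) (Fin 3) ℝ) := Matrix.linftyOpNormedAlgebra
    rw [NormedSpace.exp_eq_tsum (𝕂 := ℝ)]
    exact (NormedSpace.expSeries_summable' (𝕂 := ℝ) A).hasSum
  have hg : HasSum (fun n : ℕ => ((n.factorial : ℝ)⁻¹) * Matrix.trace (F * A ^ n))
      (Matrix.trace (F * P)) := by
    have := hexp.mapL L
    simpa [hLapp, Matrix.mul_smul, Matrix.trace_smul, smul_eq_mul] using this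
  have hT : Summable (fun k : ℕ => (-q) ^ k / ((2 * k + 2).factorial : ℝ)) := by
    refine Summable.of_norm_bounded (Real.summable_pow_div_factorial q) ?_
    intro k
    rw [norm_div, norm_pow, norm_neg, Real.norm_of_nonneg hq0, Real.norm_natCast]
    refine div_le_div_of_nonneg_left (by positivity) (by positivity) ?_
    exact_mod_cast Nat.factorial_le (by omega)
  set T : ℝ := ∑' k : ℕ, (-q) ^ k / ((2 * k + 2).factorial : ℝ) with hTdef
  have hTsum : HasSum (fun k : ℕ => (-q) ^ k / ((2 * k + 2).factorial : ℝ)) T := hT.hasSum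
  have key : Matrix.trace (F * P) = Matrix.trace F + (-S) * T := by
    have hodd : HasSum (fun k : ℕ =>
        ((((2 * k + 1).factorial : ℝ))⁻¹) * Matrix.trace (F * A ^ (2 * k + 1))) 0 := by
      have h0 : ∀ k : ℕ, ((((2 * k + 1).factorial : ℝ))⁻¹) * Matrix.trace (F * A ^ (2 * k + 1)) = 0 := by
        intro k
        rw [hA, hat_pow_odd, Matrix.mul_smul, Matrix.trace_smul, smul_eq_mul, ← hq, trace_FA]
        ring
      simpa [h0] using hasSum_zero
    have heven : HasSum (fun k : ℕ =>
        ((((2 * k + 2).factorial : ℝ))⁻¹) * Matrix.trace (F * A ^ (2 * k + 2))) ((-S) * T) := by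
      have he : ∀ k : ℕ, ((((2 * k + 2).factorial : ℝ))⁻¹) * Matrix.trace (F * A ^ (2 * k + 2))
          = (-S) * ((-q) ^ k / ((2 * k + 2).factorial : ℝ)) := by
        intro k
        rw [hA, hat_pow_even, Matrix.mul_smul, Matrix.trace_smul, smul_eq_mul, ← hq, trace_FA2,
          ← hS]
        ring
      simpa [he] using hTsum.mul_left (-S)
    have hshift : HasSum (fun n : ℕ => ((((n+1).factorial : ℝ))⁻¹) * Matrix.trace (F * A ^ (n+1)))
        (0 + (-S) * T) := by
      refine HasSum.even_add_odd ?_ ?_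
      · simpa using hodd
      · simpa [show ∀ k : ℕ, 2 * k + 1 + 1 = 2 * k + 2 from fun k => by ring] using heven
    have h1 := (hasSum_nat_add_iff (f := fun n : ℕ =>
        ((n.factorial : ℝ)⁻¹) * Matrix.trace (F * A ^ n)) 1).mp hshift
    simp only [Finset.range_one, Finset.sum_singleton, pow_zero, Nat.factorial_zero,
      Nat.cast_one, inv_one, one_mul, Matrix.mul_one] at h1
    have h2 := h1.unique hg
    linarith [h2]
  have hnorm : enorm3 y ^ 2 = q := by
    rw [enorm3, Real.sq_sqrt (by positivity), Fin.sum_univ_three]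
  have hcos : 1 - Real.cos (enorm3 y) = q * T := by
    have hc := Real.hasSum_cos (enorm3 y)
    have hc' : HasSum (fun n : ℕ => (-1 : ℝ) ^ (n + 1) * enorm3 y ^ (2 * (n + 1)) /
        ((2 * (n + 1)).factorial : ℝ)) (Real.cos (enorm3 y) - 1) := by
      refine (hasSum_nat_add_iff (f := fun n : ℕ =>
        (-1 : ℝ) ^ n * enorm3 y ^ (2 * n) / ((2 * n).factorial : ℝ))
        (g := Real.cos (enorm3 y) - 1) 1).mpr ?_
      simpa using hc
    have he : ∀ n : ℕ, (-1 : ℝ) ^ (n + 1) * enorm3 y ^ (2 * (n + 1)) /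
        ((2 * (n + 1)).factorial : ℝ) = (-q) * ((-q) ^ n / ((2 * n + 2).factorial : ℝ)) := by
      intro n
      have h2 : enorm3 y ^ (2 * (n + 1)) = q ^ (n + 1) := by
        rw [pow_mul, hnorm]
      rw [h2, show 2 * (n + 1) = 2 * n + 2 by ring, neg_pow q n]
      ring
    have hc'' : HasSum (fun n : ℕ => (-q) * ((-q) ^ n / ((2 * n + 2).factorial : ℝ)))
        (Real.cos (enorm3 y) - 1) := by
      refine hc'.congr_fun fun n => (he n).symm
    have := hc''.unique (hTsum.mul_left (-q))
    linarith [this]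
  have hLHS : (1 / 2 : ℝ) * Matrix.trace (F * (1 - P)) = S * T / 2 := by
    rw [mul_sub, Matrix.mul_one, Matrix.trace_sub, key]
    ring
  rw [hLHS, hnorm, hcos]
  rcases eq_or_ne q 0 with h | h
  · have hy0 : y 0 = 0 ∧ y 1 = 0 ∧ y 2 = 0 := by
      constructor
      · nlinarith [sq_nonneg (y 0), sq_nonneg (y 1), sq_nonneg (y 2)]
      constructor
      · nlinarith [sq_nonneg (y 0), sq_nonneg (y 1), sq_nonneg (y 2)]
      · nlinarith [sq_nonneg (y 0), sq_nonneg (y 1), sq_nonneg (y 2)]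
    have hS0 : S = 0 := by rw [hS, hy0.1, hy0.2.1, hy0.2.2]; ring
    rw [hS0]; ring
  · field_simp
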